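/- For q ∈ (0, 1] and γ* = 1/(3(1 − (3/11) q^{1/3})), one has γ* ≤ 11/24 and (3γ*−1)/(3γ*+1) ≤ [ q·κ(γ*) / (1+2γ*) ]^{1/3}, where κ(γ) = (1−2γ) − (16/125)(1/q − 1)((3γ−1)/γ)³. -/

import Mathlib

/-- For `q ∈ (0,1]` and `γ* = 1/(3(1 − (3/11)q^{1/3}))` one has `γ* ≤ 11/24` and
`(3γ*−1)/(3γ*+1) ≤ [q·κ(γ*)/(1+2γ*)]^{1/3}`, where
`κ(γ) = (1−2γ) − (16/125)(1/q − 1)((3γ−1)/γ)³`. -/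
theorem gamma_star_choice (q : ℝ) (hq : q ∈ Set.Ioc (0 : ℝ) 1)
    (γs : ℝ) (hγs : γs = 1 / (3 * (1 - (3/11) * q ^ ((1 : ℝ)/3))))
    (κ : ℝ → ℝ)
    (hκ : ∀ γ, κ γ = (1 - 2 * γ) - (16/125) * (1/q - 1) * ((3 * γ - 1) / γ) ^ 3) :
    γs ≤ 11/24 ∧
    (3 * γs - 1) / (3 * γs + 1) ≤ (q * κ γs / (1 + 2 * γs)) ^ ((1 : ℝ)/3) := by
  obtain ⟨hq0, hq1⟩ := hq
  set t : ℝ := q ^ ((1 : ℝ)/3) with ht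
  have ht0 : 0 < t := Real.rpow_pos_of_pos hq0 _
  have ht1 : t ≤ 1 := Real.rpow_le_one hq0.le hq1 (by norm_num)
  have htq : t ^ 3 = q := by
    rw [ht, ← Real.rpow_natCast (q ^ ((1:ℝ)/3)) 3, ← Real.rpow_mul hq0.le]
    norm_num
  have hd : (0:ℝ) < 11 - 3*t := by linarith
  have hγ : γs = 11 / (3 * (11 - 3*t)) := by
    rw [hγs]
    rw [show (1 - (3/11) * t) = (11 - 3*t)/11 by ring]
    field_simp
  have h22 : (0:ℝ) < 22 - 3*t := by linarith
  have h55 : (0:ℝ) < 55 - 9*t := by linarith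
  constructor
  · rw [hγ, div_le_div_iff₀ (by positivity) (by norm_num)]
    nlinarith
  · have hA : (3 * γs - 1) / (3 * γs + 1) = 3*t/(22-3*t) := by
      rw [hγ]; field_simp; ring
    have hA0 : 0 ≤ 3*t/(22-3*t) := by positivity
    have hqκ : q * κ γs
        = (t^3*(11-9*t) - (11664/166375)*(1 - t^3)*t^3*(3*(11-3*t))) / (3*(11-3*t)) := by
      rw [hκ, hγ, ← htq]
      have ht3 : (t:ℝ)^3 ≠ 0 := by positivity
      have hd0 : (11 - t*3) ≠ 0 := by linarith
      field_simp
      ring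
    have h2γ : 1 + 2 * γs = (55-9*t)/(3*(11-3*t)) := by
      rw [hγ]; field_simp; ring
    have hB : q * κ γs / (1 + 2 * γs)
        = (t^3*(11-9*t) - (11664/166375)*(1 - t^3)*t^3*(3*(11-3*t))) / (55-9*t) := by
      rw [hqκ, h2γ]
      have hd0 : (11 - t*3) ≠ 0 := by linarith
      have h550 : (55 - t*9) ≠ 0 := by linarith
      field_simp
    have key : (3*t/(22-3*t))^3 ≤ q * κ γs / (1 + 2 * γs) := by
      rw [hB, div_pow, div_le_div_iff₀ (by positivity) h55]
      have h1t : 0 ≤ 1 - t := by linarith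
      nlinarith [pow_pos ht0 3, mul_nonneg (mul_nonneg h1t h1t) (pow_pos ht0 3).le,
        mul_nonneg h1t (pow_pos ht0 3).le, mul_nonneg h1t (pow_pos ht0 4).le,
        mul_nonneg h1t (pow_pos ht0 5).le, mul_nonneg h1t (pow_pos ht0 6).le,
        mul_nonneg (mul_nonneg h1t h1t) (pow_pos ht0 4).le,
        mul_nonneg (mul_nonneg h1t h1t) (pow_pos ht0 5).le]
    calc (3 * γs - 1) / (3 * γs + 1) = ((3*t/(22-3*t))^3) ^ ((1:ℝ)/3) := by
          rw [hA, ← Real.rpow_natCast (3*t/(22-3*t)) 3, ← Real.rpow_mul hA0]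
          norm_num
      _ ≤ (q * κ γs / (1 + 2 * γs)) ^ ((1:ℝ)/3) :=
          Real.rpow_le_rpow (by positivity) key (by norm_num)
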